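/- Let V be a finite-dimensional complex vector space, let N be a positive integer, and let X and g be commuting endomorphisms of V with X^N = id_V. For 0 ≤ k < N let V_k denote the eigenspace of X for the eigenvalue e(−k/N) = exp(−2πik/N) (so V = ⊕_{0≤k<N} V_k and each V_k is g-invariant). Then ∑_{0≤k<N} (1/2 − k/N)·Tr(g|_{V_k}) = Tr(g)/(2N) + (1/N)·∑_{0<j<N} Tr(X^j·g)/(1 − e(j/N)), where e(x) := exp(2πix). -/

import Mathlib

open Finset Complex

lemma geom_aux (ω : ℂ) (n : ℕ) :
    (1 - ω) * ∑ m ∈ Finset.range n, (m : ℂ) * ω ^ m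
      = (∑ m ∈ Finset.range n, ω ^ m) - 1 - ((n : ℂ) - 1) * ω ^ n := by
  induction n with
  | zero => simp
  | succ n ih =>
    rw [Finset.sum_range_succ, Finset.sum_range_succ (f := (ω ^ ·)), mul_add, ih]
    push_cast
    ring

lemma exp_root_eq_one_iff (N : ℕ) (hN : 0 < N) (d : ℤ) :
    Complex.exp (2 * Real.pi * Complex.I * d / N) = 1 ↔ (N : ℤ) ∣ d := by
  have hNC : (N : ℂ) ≠ 0 := Nat.cast_ne_zero.mpr hN.ne'
  have h2pi : (2 * (Real.pi : ℂ) * Complex.I) ≠ 0 := by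
    simp [Real.pi_ne_zero, Complex.I_ne_zero, Complex.ofReal_ne_zero]
  rw [Complex.exp_eq_one_iff]
  constructor
  · rintro ⟨n, hn⟩
    have : (d : ℂ) = n * N := by
      field_simp at hn
      exact mul_left_cancel₀ h2pi (by linear_combination (2 * (Real.pi : ℂ) * Complex.I) * hn)
    have hd : d = n * N := by exact_mod_cast this
    exact Dvd.intro_left n hd.symm
  · rintro ⟨t, rfl⟩
    refine ⟨t, ?_⟩
    push_cast
    field_simp

lemma sum_root_pow (N : ℕ) (hN : 0 < N) (d : ℤ) (hd : ¬ ((N : ℤ) ∣ d)) :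
    ∑ m ∈ Finset.range N, Complex.exp (2 * Real.pi * Complex.I * d / N) ^ m = 0 := by
  have hω : Complex.exp (2 * Real.pi * Complex.I * d / N) ≠ 1 :=
    fun h => hd ((exp_root_eq_one_iff N hN d).mp h)
  have hpow : Complex.exp (2 * Real.pi * Complex.I * d / N) ^ N = 1 := by
    rw [← Complex.exp_nat_mul]
    have h1 : (N : ℂ) * (2 * Real.pi * Complex.I * d / N) = d * (2 * Real.pi * Complex.I) := by
      have hNC : (N : ℂ) ≠ 0 := Nat.cast_ne_zero.mpr hN.ne'
      field_simp
    rw [h1]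
    exact_mod_cast Complex.exp_int_mul_two_pi_mul_I d
  rw [geom_sum_eq hω, hpow, sub_self, zero_div]

lemma sum_mul_root_pow (N : ℕ) (hN : 0 < N) (ω : ℂ) (hω : ω ≠ 1) (hpow : ω ^ N = 1) :
    ∑ m ∈ Finset.range N, (m : ℂ) * ω ^ m = -N / (1 - ω) := by
  have h1 : (1 : ℂ) - ω ≠ 0 := sub_ne_zero.mpr (Ne.symm hω)
  have hgeom : ∑ m ∈ Finset.range N, ω ^ m = 0 := by
    rw [geom_sum_eq hω, hpow, sub_self, zero_div]
  have := geom_aux ω N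
  rw [hgeom, hpow] at this
  rw [eq_div_iff h1]
  linear_combination this

lemma star_identity (N k : ℕ) (hN : 0 < N) (hk : k < N) :
    (1 : ℂ) / (2 * N) + (1 / N) * ∑ j ∈ Finset.Ioo 0 N,
        Complex.exp (-(2 * Real.pi * Complex.I * k / N)) ^ j /
          (1 - Complex.exp (2 * Real.pi * Complex.I * j / N)) =
      1 / 2 - k / N := by
  have hNC : (N : ℂ) ≠ 0 := Nat.cast_ne_zero.mpr hN.ne'
  have hIoo : ∀ f : ℕ → ℂ, ∑ j ∈ Finset.Ioo 0 N, f j = (∑ j ∈ Finset.range N, f j) - f 0 := by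
    intro f
    have h : Finset.range N = insert 0 (Finset.Ioo 0 N) := by
      ext j; simp only [Finset.mem_range, Finset.mem_insert, Finset.mem_Ioo]; omega
    rw [h, Finset.sum_insert (by simp)]
    ring
  have key : ∀ j ∈ Finset.Ioo 0 N,
      Complex.exp (-(2 * Real.pi * Complex.I * k / N)) ^ j /
          (1 - Complex.exp (2 * Real.pi * Complex.I * j / N))
        = ∑ m ∈ Finset.range N,
            (-(1 / (N : ℂ))) * ((m : ℂ) *
              Complex.exp (2 * Real.pi * Complex.I * ((m : ℂ) - k) / N) ^ j) := by
    intro j hj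
    obtain ⟨hj0, hjN⟩ := Finset.mem_Ioo.mp hj
    have hcast : (2 * Real.pi * Complex.I * (j : ℂ) / N) =
        (2 * Real.pi * Complex.I * ((j : ℤ) : ℂ) / N) := by push_cast; ring
    have hωne : Complex.exp (2 * Real.pi * Complex.I * j / N) ≠ 1 := by
      rw [hcast, ne_eq, exp_root_eq_one_iff N hN, Int.natCast_dvd_natCast]
      intro h
      have := Nat.eq_zero_of_dvd_of_lt h hjN
      omega
    have hωpow : Complex.exp (2 * Real.pi * Complex.I * j / N) ^ N = 1 := by
      rw [hcast, ← Complex.exp_nat_mul]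
      have h1 : (N : ℂ) * (2 * Real.pi * Complex.I * ((j : ℤ) : ℂ) / N) =
          ((j : ℤ) : ℂ) * (2 * Real.pi * Complex.I) := by field_simp
      rw [h1]
      exact Complex.exp_int_mul_two_pi_mul_I j
    have h1ω : (1 : ℂ) - Complex.exp (2 * Real.pi * Complex.I * j / N) ≠ 0 :=
      sub_ne_zero.mpr (Ne.symm hωne)
    have hsum := sum_mul_root_pow N hN _ hωne hωpow
    have hrw : ∀ m ∈ Finset.range N,
        (-(1 / (N : ℂ))) * ((m : ℂ) *
            Complex.exp (2 * Real.pi * Complex.I * ((m : ℂ) - k) / N) ^ j)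
          = (-(1 / (N : ℂ)) * Complex.exp (-(2 * Real.pi * Complex.I * k / N)) ^ j) *
              ((m : ℂ) * Complex.exp (2 * Real.pi * Complex.I * j / N) ^ m) := by
      intro m _
      have he : Complex.exp (2 * Real.pi * Complex.I * ((m : ℂ) - k) / N) ^ j
          = Complex.exp (-(2 * Real.pi * Complex.I * k / N)) ^ j *
              Complex.exp (2 * Real.pi * Complex.I * j / N) ^ m := by
        rw [← Complex.exp_nat_mul, ← Complex.exp_nat_mul, ← Complex.exp_nat_mul,
          ← Complex.exp_add]
        congr 1
        field_simp
        ring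
      rw [he]; ring
    rw [Finset.sum_congr rfl hrw, ← Finset.mul_sum, hsum]
    field_simp
  rw [Finset.sum_congr rfl key, Finset.sum_comm]
  have hinner : ∀ m ∈ Finset.range N,
      ∑ j ∈ Finset.Ioo 0 N, (-(1 / (N : ℂ))) * ((m : ℂ) *
          Complex.exp (2 * Real.pi * Complex.I * ((m : ℂ) - k) / N) ^ j)
        = (1 / (N : ℂ)) * m - (if m = k then (m : ℂ) else 0) := by
    intro m hm
    have hmN := Finset.mem_range.mp hm
    have hpull : ∀ j ∈ Finset.Ioo 0 N, (-(1 / (N : ℂ))) * ((m : ℂ) *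
          Complex.exp (2 * Real.pi * Complex.I * ((m : ℂ) - k) / N) ^ j)
        = (-(1 / (N : ℂ)) * m) *
            Complex.exp (2 * Real.pi * Complex.I * ((m : ℂ) - k) / N) ^ j := by
      intro j _; ring
    rw [Finset.sum_congr rfl hpull, ← Finset.mul_sum,
      hIoo (fun j => Complex.exp (2 * Real.pi * Complex.I * ((m : ℂ) - k) / N) ^ j), pow_zero]
    have hrange : ∑ j ∈ Finset.range N,
        Complex.exp (2 * Real.pi * Complex.I * ((m : ℂ) - k) / N) ^ j
          = if m = k then (N : ℂ) else 0 := by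
      by_cases hmk : m = k
      · subst hmk
        simp
      · rw [if_neg hmk]
        have hcast : (2 * Real.pi * Complex.I * ((m : ℂ) - k) / N) =
            (2 * Real.pi * Complex.I * ((((m : ℤ) - k) : ℤ) : ℂ) / N) := by push_cast; ring
        rw [hcast]
        refine sum_root_pow N hN _ ?_
        rintro ⟨t, ht⟩
        have hne : (m : ℤ) - k ≠ 0 := by
          intro h; exact hmk (by omega)
        have habs : |(m : ℤ) - k| < N := by
          rw [abs_lt]; omega
        have := Int.eq_zero_of_abs_lt_dvd ⟨t, ht⟩ habs
        exact hne this
      -- done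
    rw [hrange]
    split_ifs with h
    · subst h
      field_simp
      ring
    · ring
  rw [Finset.sum_congr rfl hinner, Finset.sum_sub_distrib, Finset.sum_ite_eq' (Finset.range N) k
    (fun m => (m : ℂ)), if_pos (Finset.mem_range.mpr hk), ← Finset.mul_sum]
  have hGauss : (∑ m ∈ Finset.range N, (m : ℂ)) * 2 = N * (N - 1) := by
    have h := Finset.sum_range_id_mul_two N
    have h2 : (((∑ m ∈ Finset.range N, m) * 2 : ℕ) : ℂ) = ((N * (N - 1) : ℕ) : ℂ) := by
      exact_mod_cast congrArg (Nat.cast : ℕ → ℂ) h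
    push_cast [Nat.cast_sub hN] at h2
    convert h2 using 2
  have hG2 : (∑ m ∈ Finset.range N, (m : ℂ)) = N * (N - 1) / 2 :=
    (eq_div_iff (two_ne_zero)).mpr hGauss
  rw [hG2]
  field_simp
  ring

lemma scalar_main (N : ℕ) (hN : 0 < N) (T : ℕ → ℂ) :
    ∑ k ∈ Finset.range N, ((1 : ℂ) / 2 - (k : ℂ) / (N : ℂ)) * T k
      = (∑ k ∈ Finset.range N, T k) / (2 * (N : ℂ))
        + (1 / (N : ℂ)) * ∑ j ∈ Finset.Ioo 0 N,
            (∑ k ∈ Finset.range N,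
              Complex.exp (-(2 * Real.pi * Complex.I * (k : ℂ) / (N : ℂ))) ^ j * T k)
              / (1 - Complex.exp (2 * Real.pi * Complex.I * (j : ℂ) / (N : ℂ))) := by
  have hk : ∀ k ∈ Finset.range N, ((1 : ℂ) / 2 - (k : ℂ) / N) * T k
      = T k / (2 * N) + (1 / (N : ℂ)) * ∑ j ∈ Finset.Ioo 0 N,
          Complex.exp (-(2 * Real.pi * Complex.I * k / N)) ^ j * T k /
            (1 - Complex.exp (2 * Real.pi * Complex.I * j / N)) := by
    intro k hkm
    have h := star_identity N k hN (Finset.mem_range.mp hkm)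
    have hs : ∑ j ∈ Finset.Ioo 0 N,
        Complex.exp (-(2 * Real.pi * Complex.I * k / N)) ^ j * T k /
          (1 - Complex.exp (2 * Real.pi * Complex.I * j / N))
        = (∑ j ∈ Finset.Ioo 0 N,
            Complex.exp (-(2 * Real.pi * Complex.I * k / N)) ^ j /
              (1 - Complex.exp (2 * Real.pi * Complex.I * j / N))) * T k := by
      rw [Finset.sum_mul]
      exact Finset.sum_congr rfl fun j _ => by ring
    rw [hs]
    linear_combination (-(T k)) * h
  have h2 : ∀ j ∈ Finset.Ioo 0 N,
      (∑ k ∈ Finset.range N,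
          Complex.exp (-(2 * Real.pi * Complex.I * (k : ℂ) / N)) ^ j * T k)
        / (1 - Complex.exp (2 * Real.pi * Complex.I * (j : ℂ) / N))
      = ∑ k ∈ Finset.range N,
          Complex.exp (-(2 * Real.pi * Complex.I * (k : ℂ) / N)) ^ j * T k /
            (1 - Complex.exp (2 * Real.pi * Complex.I * (j : ℂ) / N)) :=
    fun j _ => Finset.sum_div _ _ _
  rw [Finset.sum_congr rfl hk, Finset.sum_congr rfl h2, Finset.sum_comm, Finset.mul_sum,
    Finset.sum_div, ← Finset.sum_add_distrib]

lemma restrict_pow_mul_eq_smul {V : Type*} [AddCommGroup V] [Module ℂ V]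
    (X g : Module.End ℂ V) (μ : ℂ) (j : ℕ) (p : Submodule ℂ V)
    (hp : ∀ x ∈ p, X x = μ • x)
    (h1 : ∀ x ∈ p, g x ∈ p) (h2 : ∀ x ∈ p, (X ^ j * g) x ∈ p) :
    (X ^ j * g).restrict h2 = μ ^ j • g.restrict h1 := by
  have hpow : ∀ i : ℕ, ∀ y ∈ p, (X ^ i) y = μ ^ i • y := by
    intro i
    induction i with
    | zero => intro y hy; simp
    | succ i ih =>
      intro y hy
      have hXy : X y = μ • y := hp y hy
      have : (X ^ (i + 1)) y = (X ^ i) (X y) := by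
        rw [pow_succ]
        rfl
      rw [this, hXy, map_smul, ih y hy, pow_succ, smul_smul, mul_comm]
  ext x
  have hx := x.2
  simp only [LinearMap.restrict_apply, LinearMap.smul_apply, Module.End.mul_apply,
    SetLike.val_smul]
  exact hpow j (g x) (h1 x hx)

/-- Let `V` be a finite dimensional complex vector space, `X` and `g`
commuting endomorphisms with `X ^ N = 1`, and for `0 ≤ k < N` let `V_k` be the
eigenspace of `X` with eigenvalue `exp (-2πik/N)` (each is `g`-invariant).  Then
`∑_{0 ≤ k < N} (1/2 - k/N) Tr(g|V_k)
  = Tr(g)/(2N) + (1/N) ∑_{0 < j < N} Tr(X^j g)/(1 - exp (2πij/N))`. -/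
theorem trace_eigenspace_identity {V : Type*} [AddCommGroup V] [Module ℂ V]
    [FiniteDimensional ℂ V] (N : ℕ) (hN : 0 < N) (X g : Module.End ℂ V)
    (hcomm : Commute X g) (hX : X ^ N = 1) :
    ∑ k ∈ Finset.range N, ((1 : ℂ) / 2 - (k : ℂ) / (N : ℂ)) *
        LinearMap.trace ℂ _
          (g.restrict (fun x hx => Module.End.mapsTo_genEigenspace_of_comm hcomm
            (Complex.exp (-(2 * Real.pi * Complex.I * (k : ℂ) / (N : ℂ)))) 1 hx)) =
      LinearMap.trace ℂ V g / (2 * (N : ℂ)) +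
        (1 / (N : ℂ)) * ∑ j ∈ Finset.Ioo 0 N,
          LinearMap.trace ℂ V (X ^ j * g) /
            (1 - Complex.exp (2 * Real.pi * Complex.I * (j : ℂ) / (N : ℂ))) := by
  classical
  have hNC : (N : ℂ) ≠ 0 := Nat.cast_ne_zero.mpr hN.ne'
  have h2pi : (2 * (Real.pi : ℂ) * Complex.I) ≠ 0 := by
    simp [Real.pi_ne_zero, Complex.I_ne_zero, Complex.ofReal_ne_zero]
  -- the eigenvalue family
  set μ : ℕ → ℂ := fun k => Complex.exp (-(2 * Real.pi * Complex.I * (k : ℂ) / (N : ℂ)))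
    with hμdef
  -- the eigenspaces as a family over `Fin N`
  set W : Fin N → Submodule ℂ V := fun k => X.genEigenspace (μ k) 1 with hWdef
  -- injectivity of eigenvalues
  have hinj : Function.Injective (fun k : Fin N => μ k) := by
    intro a b hab
    simp only [hμdef] at hab
    obtain ⟨n, hn⟩ := Complex.exp_eq_exp_iff_exists_int.mp hab
    have hcancel : (((b : ℕ) : ℂ)) - ((a : ℕ) : ℂ) = n * N := by
      field_simp at hn
      apply mul_left_cancel₀ h2pi
      apply mul_right_cancel₀ hNC
      linear_combination (2 * (Real.pi : ℂ) * Complex.I * N) * hn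
    have hcast2 : ((b : ℕ) : ℤ) - ((a : ℕ) : ℤ) = n * N := by exact_mod_cast hcancel
    have hdvd : (N : ℤ) ∣ (((b : ℕ) : ℤ) - ((a : ℕ) : ℤ)) := ⟨n, by linarith⟩
    have habs : |(((b : ℕ) : ℤ) - ((a : ℕ) : ℤ))| < N := by
      have := a.isLt; have := b.isLt
      rw [abs_lt]; omega
    have := Int.eq_zero_of_abs_lt_dvd hdvd habs
    have : (a : ℕ) = (b : ℕ) := by omega
    exact Fin.ext this
  -- independence
  have hindep : iSupIndep W := (X.independent_genEigenspace 1).comp hinj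
  -- semisimplicity
  have hsq : Squarefree (Polynomial.X ^ N - Polynomial.C (1 : ℂ)) :=
    (Polynomial.separable_X_pow_sub_C (1 : ℂ) hNC one_ne_zero).squarefree
  have hzero : Polynomial.aeval X (Polynomial.X ^ N - Polynomial.C (1 : ℂ)) = 0 := by
    simp [hX]
  have hsemi : X.IsSemisimple := Module.End.isSemisimple_of_squarefree_aeval_eq_zero hsq hzero
  have hmax : ∀ ν : ℂ, X.maxGenEigenspace ν = X.genEigenspace ν 1 :=
    fun ν => hsemi.isFinitelySemisimple.maxGenEigenspace_eq_eigenspace ν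
  -- the supremum is everything
  have htop : ⨆ k : Fin N, W k = ⊤ := by
    rw [eq_top_iff, ← Module.End.iSup_maxGenEigenspace_eq_top X]
    refine iSup_le fun ν => ?_
    by_cases hbot : X.maxGenEigenspace ν = ⊥
    · rw [hbot]; exact bot_le
    · -- there is an eigenvector, hence ν ^ N = 1
      rw [hmax] at hbot ⊢
      obtain ⟨x, hx, hx0⟩ := Submodule.exists_mem_ne_zero_of_ne_bot hbot
      have hXx : X x = ν • x := Module.End.mem_eigenspace_iff.mp hx
      have hpow : ∀ i : ℕ, (X ^ i) x = ν ^ i • x := by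
        intro i
        induction i with
        | zero => simp
        | succ i ih =>
          have : (X ^ (i + 1)) x = (X ^ i) (X x) := by rw [pow_succ]; rfl
          rw [this, hXx, map_smul, ih, smul_smul, pow_succ]
          ring_nf
      have hν1 : ν ^ N = 1 := by
        have h1 : (X ^ N) x = x := by rw [hX]; rfl
        rw [hpow N] at h1
        have : (ν ^ N - 1) • x = 0 := by
          rw [sub_smul, one_smul, h1, sub_self]
        rcases smul_eq_zero.mp this with h | h
        · exact sub_eq_zero.mp h
        · exact absurd h hx0
      haveI : NeZero N := ⟨hN.ne'⟩
      obtain ⟨i, hiN, hi⟩ :=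
        (Complex.isPrimitiveRoot_exp N hN.ne').eq_pow_of_pow_eq_one hν1
      -- find k with μ k = ν
      have hexists : ∃ k : Fin N, μ (k : ℕ) = ν := by
        rcases Nat.eq_zero_or_pos i with hi0 | hi0
        · refine ⟨⟨0, hN⟩, ?_⟩
          rw [← hi, hi0]
          simp [hμdef]
        · refine ⟨⟨N - i, by omega⟩, ?_⟩
          rw [← hi]
          simp only [hμdef]
          have harg : -(2 * Real.pi * Complex.I * ((N - i : ℕ) : ℂ) / N)
              = (i : ℂ) * (2 * Real.pi * Complex.I / N) + (-1 : ℤ) * (2 * Real.pi * Complex.I) := by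
            push_cast [Nat.cast_sub hiN.le]
            field_simp
            ring
          rw [harg, Complex.exp_add, Complex.exp_int_mul_two_pi_mul_I, mul_one,
            ← Complex.exp_nat_mul]
      obtain ⟨k, hk⟩ := hexists
      have : X.genEigenspace ν 1 = W k := by rw [hWdef]; simp [hk]
      rw [this]
      exact le_iSup W k
  have hint : DirectSum.IsInternal W :=
    DirectSum.isInternal_submodule_of_iSupIndep_of_iSup_eq_top hindep htop
  -- maps-to proofs
  have hfg : ∀ k : Fin N, Set.MapsTo g (W k) (W k) :=
    fun k => Module.End.mapsTo_genEigenspace_of_comm hcomm (μ (k : ℕ)) 1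
  -- trace of g
  have key1 : LinearMap.trace ℂ V g = ∑ k ∈ Finset.range N,
      LinearMap.trace ℂ _
        (g.restrict (fun x hx => Module.End.mapsTo_genEigenspace_of_comm hcomm
          (Complex.exp (-(2 * Real.pi * Complex.I * (k : ℂ) / (N : ℂ)))) 1 hx)) := by
    rw [LinearMap.trace_eq_sum_trace_restrict hint hfg]
    exact Fin.sum_univ_eq_sum_range (fun k => LinearMap.trace ℂ _
      (g.restrict (fun x hx => Module.End.mapsTo_genEigenspace_of_comm hcomm
        (Complex.exp (-(2 * Real.pi * Complex.I * (k : ℂ) / (N : ℂ)))) 1 hx))) N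
  -- trace of X^j * g
  have key2 : ∀ j : ℕ, LinearMap.trace ℂ V (X ^ j * g) = ∑ k ∈ Finset.range N,
      Complex.exp (-(2 * Real.pi * Complex.I * (k : ℂ) / (N : ℂ))) ^ j *
        LinearMap.trace ℂ _
          (g.restrict (fun x hx => Module.End.mapsTo_genEigenspace_of_comm hcomm
            (Complex.exp (-(2 * Real.pi * Complex.I * (k : ℂ) / (N : ℂ)))) 1 hx)) := by
    intro j
    have hcommj : Commute X (X ^ j * g) :=
      Commute.mul_right ((Commute.refl X).pow_right j) hcomm
    have hfgj : ∀ k : Fin N, Set.MapsTo (X ^ j * g) (W k) (W k) :=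
      fun k => Module.End.mapsTo_genEigenspace_of_comm hcommj (μ (k : ℕ)) 1
    rw [LinearMap.trace_eq_sum_trace_restrict hint hfgj]
    rw [← Fin.sum_univ_eq_sum_range (fun k => Complex.exp
      (-(2 * Real.pi * Complex.I * (k : ℂ) / (N : ℂ))) ^ j *
        LinearMap.trace ℂ _
          (g.restrict (fun x hx => Module.End.mapsTo_genEigenspace_of_comm hcomm
            (Complex.exp (-(2 * Real.pi * Complex.I * (k : ℂ) / (N : ℂ)))) 1 hx))) N]
    refine Finset.sum_congr rfl fun k _ => ?_
    have hp : ∀ x ∈ W k, X x = μ (k : ℕ) • x := fun x hx =>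
      Module.End.mem_eigenspace_iff.mp hx
    rw [restrict_pow_mul_eq_smul X g (μ (k : ℕ)) j (W k) hp (hfg k) (hfgj k)]
    rw [map_smul]
    rfl
  rw [key1]
  have key2' : ∑ j ∈ Finset.Ioo 0 N, LinearMap.trace ℂ V (X ^ j * g) /
        (1 - Complex.exp (2 * Real.pi * Complex.I * (j : ℂ) / (N : ℂ)))
      = ∑ j ∈ Finset.Ioo 0 N, (∑ k ∈ Finset.range N,
          Complex.exp (-(2 * Real.pi * Complex.I * (k : ℂ) / (N : ℂ))) ^ j *
            LinearMap.trace ℂ _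
              (g.restrict (fun x hx => Module.End.mapsTo_genEigenspace_of_comm hcomm
                (Complex.exp (-(2 * Real.pi * Complex.I * (k : ℂ) / (N : ℂ)))) 1 hx))) /
          (1 - Complex.exp (2 * Real.pi * Complex.I * (j : ℂ) / (N : ℂ))) :=
    Finset.sum_congr rfl fun j _ => by rw [key2 j]
  rw [key2']
  exact scalar_main N hN (fun k => LinearMap.trace ℂ _
    (g.restrict (fun x hx => Module.End.mapsTo_genEigenspace_of_comm hcomm
      (Complex.exp (-(2 * Real.pi * Complex.I * (k : ℂ) / (N : ℂ)))) 1 hx)))
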